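/- arXiv:2101.02739 — 6 statements merged into one kernel-verified Lean document; each statement's English description precedes it below -/
import Mathlib

section
/- A point (x1, x2, x3) in C^3 belongs to the open tetrablock E (defined by |x1 - conj(x2)·x3| + |x2 - conj(x1)·x3| < 1 - |x3|^2) if and only if for every z on the unit circle T, the pair (x1 + z·x2, z·x3) belongs to the open symmetrised bidisc G = {(s,p) : |s - conj(s)·p| < 1 - |p|^2}. -/
open Complex

lemma exists_unit_abs_add (a b : ℂ) : ∃ z : ℂ, ‖z‖ = 1 ∧
    ‖a + z * b‖ = ‖a‖ + ‖b‖ := by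
  rcases eq_or_ne a 0 with ha | ha
  · exact ⟨1, by simp, by simp [ha]⟩
  rcases eq_or_ne b 0 with hb | hb
  · exact ⟨1, by simp, by simp [hb]⟩
  have ha' : (‖a‖ : ℝ) ≠ 0 := norm_ne_zero_iff.mpr ha
  have hb' : (‖b‖ : ℝ) ≠ 0 := norm_ne_zero_iff.mpr hb
  refine ⟨(a / (‖a‖ : ℂ)) * ((starRingEnd ℂ) b / (‖b‖ : ℂ)), ?_, ?_⟩
  · simp [norm_mul, norm_div, ha', hb']
  · have hbb : (starRingEnd ℂ) b * b = ((‖b‖ : ℂ))^2 := by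
      rw [mul_comm, Complex.mul_conj]
      rw [← Complex.sq_norm]
      push_cast
      ring
    have key : a + (a / (‖a‖ : ℂ)) * ((starRingEnd ℂ) b / (‖b‖ : ℂ)) * b
        = a * (((‖a‖ + ‖b‖ : ℝ) : ℂ) / (‖a‖ : ℂ)) := by
      have ha'' : (‖a‖ : ℂ) ≠ 0 := by exact_mod_cast ha'
      have hb'' : (‖b‖ : ℂ) ≠ 0 := by exact_mod_cast hb'
      field_simp
      push_cast
      linear_combination hbb
    rw [key, norm_mul, norm_div, Complex.norm_real, Complex.norm_real,
      Real.norm_of_nonneg (by positivity), Real.norm_of_nonneg (norm_nonneg a)]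
    field_simp

theorem tetrablock_iff_symmetrised_bidisc (x₁ x₂ x₃ : ℂ) :
    (‖x₁ - (starRingEnd ℂ) x₂ * x₃‖ +
      ‖x₂ - (starRingEnd ℂ) x₁ * x₃‖ < 1 - ‖x₃‖ ^ 2) ↔
    ∀ z : ℂ, ‖z‖ = 1 →
      ‖(x₁ + z * x₂) - (starRingEnd ℂ) (x₁ + z * x₂) * (z * x₃)‖
        < 1 - ‖z * x₃‖ ^ 2 := by
  have key : ∀ z : ℂ, ‖z‖ = 1 →
      (x₁ + z * x₂) - (starRingEnd ℂ) (x₁ + z * x₂) * (z * x₃)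
        = (x₁ - (starRingEnd ℂ) x₂ * x₃) + z * (x₂ - (starRingEnd ℂ) x₁ * x₃) := by
    intro z hz
    have hz1 : (starRingEnd ℂ) z * z = 1 := by
      rw [mul_comm, Complex.mul_conj]
      rw [← Complex.sq_norm, hz]
      norm_num
    rw [map_add, map_mul]
    linear_combination (-(starRingEnd ℂ) x₂ * x₃) * hz1
  constructor
  · intro h z hz
    rw [key z hz, norm_mul, hz, one_mul]
    calc ‖(x₁ - (starRingEnd ℂ) x₂ * x₃) + z * (x₂ - (starRingEnd ℂ) x₁ * x₃)‖
        ≤ ‖x₁ - (starRingEnd ℂ) x₂ * x₃‖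
          + ‖z * (x₂ - (starRingEnd ℂ) x₁ * x₃)‖ := norm_add_le _ _
      _ = ‖x₁ - (starRingEnd ℂ) x₂ * x₃‖
          + ‖x₂ - (starRingEnd ℂ) x₁ * x₃‖ := by rw [norm_mul, hz, one_mul]
      _ < 1 - ‖x₃‖ ^ 2 := h
  · intro h
    obtain ⟨z, hz, hzmax⟩ := exists_unit_abs_add (x₁ - (starRingEnd ℂ) x₂ * x₃)
      (x₂ - (starRingEnd ℂ) x₁ * x₃)
    have := h z hz
    rw [key z hz, hzmax, norm_mul, hz, one_mul] at this
    exact this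
end

section
/- A point (x1, x2, x3) in C^3 belongs to the closed tetrablock (defined by |x1 - conj(x2)·x3| + |x2 - conj(x1)·x3| ≤ 1 - |x3|^2, together with |x1| ≤ 1 and |x2| ≤ 1) if and only if for every a in the closed unit disc, the pair (a·x1 + conj(a)·x2, x3) belongs to the closed symmetrised bidisc Γ, where Γ = {(s,p) : |s| ≤ 2 and |s - conj(s)·p| ≤ 1 - |p|^2}. -/
open Complex

private lemma key_rot (t : ℝ) (z : ℂ) : Complex.exp (t * I) * z
    = (‖z‖ : ℂ) * Complex.exp ((t + z.arg : ℝ) * I) := by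
  conv_lhs => rw [← Complex.norm_mul_exp_arg_mul_I z]
  rw [Complex.ofReal_add, add_mul, Complex.exp_add]
  ring

private lemma align (u v : ℂ) : ∃ a : ℂ, ‖a‖ = 1 ∧
    ‖a * u + (starRingEnd ℂ) a * v‖ = ‖u‖ + ‖v‖ := by
  set d : ℝ := (v.arg - u.arg) / 2 with hd
  refine ⟨Complex.exp (d * I), Complex.norm_exp_ofReal_mul_I d, ?_⟩
  have hc : (starRingEnd ℂ) (Complex.exp (↑d * I)) = Complex.exp ((-d : ℝ) * I) := by
    rw [← Complex.exp_conj]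
    congr 1
    simp [map_mul, Complex.conj_ofReal, Complex.conj_I]
  rw [hc, key_rot d u, key_rot (-d) v]
  have h1 : d + u.arg = (u.arg + v.arg) / 2 := by rw [hd]; ring
  have h2 : -d + v.arg = (u.arg + v.arg) / 2 := by rw [hd]; ring
  rw [h1, h2, ← add_mul, ← Complex.ofReal_add, norm_mul, Complex.norm_real, Real.norm_eq_abs,
    Complex.norm_exp_ofReal_mul_I, mul_one]
  exact _root_.abs_of_nonneg (add_nonneg (norm_nonneg u) (norm_nonneg v))

theorem closed_tetrablock_iff_Gamma (x₁ x₂ x₃ : ℂ) :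
    (‖x₁ - (starRingEnd ℂ) x₂ * x₃‖ +
        ‖x₂ - (starRingEnd ℂ) x₁ * x₃‖ ≤ 1 - ‖x₃‖ ^ 2 ∧
      ‖x₁‖ ≤ 1 ∧ ‖x₂‖ ≤ 1) ↔
    ∀ a : ℂ, ‖a‖ ≤ 1 →
      (‖a * x₁ + (starRingEnd ℂ) a * x₂‖ ≤ 2 ∧
        ‖(a * x₁ + (starRingEnd ℂ) a * x₂) -
            (starRingEnd ℂ) (a * x₁ + (starRingEnd ℂ) a * x₂) * x₃‖
          ≤ 1 - ‖x₃‖ ^ 2) := by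
  set u := x₁ - (starRingEnd ℂ) x₂ * x₃ with hu
  set v := x₂ - (starRingEnd ℂ) x₁ * x₃ with hv
  have hid : ∀ a : ℂ, (a * x₁ + (starRingEnd ℂ) a * x₂) -
      (starRingEnd ℂ) (a * x₁ + (starRingEnd ℂ) a * x₂) * x₃
      = a * u + (starRingEnd ℂ) a * v := by
    intro a
    simp only [hu, hv, map_add, map_mul, Complex.conj_conj]
    ring
  constructor
  · rintro ⟨h1, h2, h3⟩ a ha
    constructor
    · calc ‖a * x₁ + (starRingEnd ℂ) a * x₂‖
          ≤ ‖a‖ * ‖x₁‖ + ‖a‖ * ‖x₂‖ := by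
            simpa [norm_mul, Complex.norm_conj] using norm_add_le (a * x₁) ((starRingEnd ℂ) a * x₂)
        _ ≤ 2 := by nlinarith [norm_nonneg a, norm_nonneg x₁, norm_nonneg x₂]
    · rw [hid a]
      calc ‖a * u + (starRingEnd ℂ) a * v‖
          ≤ ‖a‖ * ‖u‖ + ‖a‖ * ‖v‖ := by
            simpa [norm_mul, Complex.norm_conj] using norm_add_le (a * u) ((starRingEnd ℂ) a * v)
        _ ≤ ‖u‖ + ‖v‖ := by
            nlinarith [norm_nonneg a, norm_nonneg u, norm_nonneg v]
        _ ≤ 1 - ‖x₃‖ ^ 2 := h1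
  · intro h
    have h3le : ‖x₃‖ ≤ 1 := by
      have h0 := (h 0 (by simp)).2
      simp only [zero_mul, map_zero, add_zero, zero_sub, norm_neg] at h0
      nlinarith [norm_nonneg x₃, norm_nonneg ((0:ℂ) - (starRingEnd ℂ) 0 * x₃), norm_nonneg (0:ℂ)]
    obtain ⟨a, ha1, ha2⟩ := align u v
    have huv : ‖u‖ + ‖v‖ ≤ 1 - ‖x₃‖ ^ 2 := by
      have := (h a (le_of_eq ha1)).2
      rw [hid a, ha2] at this
      exact this
    obtain ⟨b, hb1, hb2⟩ := align x₁ x₂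
    have hsum : ‖x₁‖ + ‖x₂‖ ≤ 2 := by
      have := (h b (le_of_eq hb1)).1
      rw [hb2] at this
      exact this
    have hone : (1 : ℂ) - x₃ * (starRingEnd ℂ) x₃ = ((1 - ‖x₃‖ ^ 2 : ℝ) : ℂ) := by
      rw [Complex.mul_conj]
      push_cast [Complex.sq_norm]
      ring
    have habs1 : ‖(1 : ℂ) - x₃ * (starRingEnd ℂ) x₃‖ = 1 - ‖x₃‖ ^ 2 := by
      rw [hone, Complex.norm_real, Real.norm_eq_abs]
      exact _root_.abs_of_nonneg (by nlinarith [norm_nonneg x₃])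
    have hx1 : ‖x₁‖ * (1 - ‖x₃‖ ^ 2) ≤ 1 - ‖x₃‖ ^ 2 := by
      have hidd : x₁ * (1 - x₃ * (starRingEnd ℂ) x₃) = u + x₃ * (starRingEnd ℂ) v := by
        simp only [hu, hv, map_sub, map_mul, Complex.conj_conj]
        ring
      have : ‖x₁‖ * (1 - ‖x₃‖ ^ 2)
          = ‖u + x₃ * (starRingEnd ℂ) v‖ := by
        rw [← hidd, norm_mul, habs1]
      rw [this]
      calc ‖u + x₃ * (starRingEnd ℂ) v‖
          ≤ ‖u‖ + ‖x₃‖ * ‖v‖ := by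
            simpa [norm_mul, Complex.norm_conj] using norm_add_le u (x₃ * (starRingEnd ℂ) v)
        _ ≤ ‖u‖ + ‖v‖ := by nlinarith [norm_nonneg v]
        _ ≤ 1 - ‖x₃‖ ^ 2 := huv
    have hx2 : ‖x₂‖ * (1 - ‖x₃‖ ^ 2) ≤ 1 - ‖x₃‖ ^ 2 := by
      have hidd : x₂ * (1 - x₃ * (starRingEnd ℂ) x₃) = v + x₃ * (starRingEnd ℂ) u := by
        simp only [hu, hv, map_sub, map_mul, Complex.conj_conj]
        ring
      have : ‖x₂‖ * (1 - ‖x₃‖ ^ 2)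
          = ‖v + x₃ * (starRingEnd ℂ) u‖ := by
        rw [← hidd, norm_mul, habs1]
      rw [this]
      calc ‖v + x₃ * (starRingEnd ℂ) u‖
          ≤ ‖v‖ + ‖x₃‖ * ‖u‖ := by
            simpa [norm_mul, Complex.norm_conj] using norm_add_le v (x₃ * (starRingEnd ℂ) u)
        _ ≤ ‖v‖ + ‖u‖ := by nlinarith [norm_nonneg u]
        _ ≤ 1 - ‖x₃‖ ^ 2 := by linarith [huv]
    refine ⟨huv, ?_, ?_⟩
    · rcases lt_or_eq_of_le h3le with hlt | heq
      · have hpos : 0 < 1 - ‖x₃‖ ^ 2 := by nlinarith [norm_nonneg x₃]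
        have := le_of_mul_le_mul_right
          (by linarith : ‖x₁‖ * (1 - ‖x₃‖ ^ 2)
            ≤ 1 * (1 - ‖x₃‖ ^ 2)) hpos
        exact this
      · have hz : ‖u‖ = 0 := by
          nlinarith [norm_nonneg u, norm_nonneg v]
        have hu0 : u = 0 := by simpa using hz
        have he : x₁ = (starRingEnd ℂ) x₂ * x₃ := sub_eq_zero.mp hu0
        have heqabs : ‖x₁‖ = ‖x₂‖ := by
          rw [he, norm_mul, Complex.norm_conj, heq, mul_one]
        linarith
    · rcases lt_or_eq_of_le h3le with hlt | heq
      · have hpos : 0 < 1 - ‖x₃‖ ^ 2 := by nlinarith [norm_nonneg x₃]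
        have := le_of_mul_le_mul_right
          (by linarith : ‖x₂‖ * (1 - ‖x₃‖ ^ 2)
            ≤ 1 * (1 - ‖x₃‖ ^ 2)) hpos
        exact this
      · have hz : ‖v‖ = 0 := by
          nlinarith [norm_nonneg u, norm_nonneg v]
        have hv0 : v = 0 := by simpa using hz
        have he : x₂ = (starRingEnd ℂ) x₁ * x₃ := sub_eq_zero.mp hv0
        have heqabs : ‖x₂‖ = ‖x₁‖ := by
          rw [he, norm_mul, Complex.norm_conj, heq, mul_one]
        linarith
end

section
/- Let s, p ∈ C with |s| ≤ 2 and |p| ≤ 1. Then (s,p) belongs to the closed symmetrised bidisc Γ = {(s,p) : |s| ≤ 2 and |s - conj(s)p| ≤ 1 - |p|^2} if and only if (s/2, s/2, p) belongs to the closed tetrablock Ē = {(x1,x2,x3) : |x1 - conj(x2)x3| + |x2 - conj(x1)x3| ≤ 1 - |x3|^2, |x1| ≤ 1, |x2| ≤ 1}. -/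
open Complex

theorem Gamma_iff_half_s_half_s_p (s p : ℂ) (hs : ‖s‖ ≤ 2)
    (hp : ‖p‖ ≤ 1) :
    (‖s‖ ≤ 2 ∧ ‖s - (starRingEnd ℂ) s * p‖ ≤ 1 - ‖p‖ ^ 2) ↔
    (‖s / 2 - (starRingEnd ℂ) (s / 2) * p‖ +
        ‖s / 2 - (starRingEnd ℂ) (s / 2) * p‖ ≤ 1 - ‖p‖ ^ 2 ∧
      ‖s / 2‖ ≤ 1 ∧ ‖s / 2‖ ≤ 1) := by
  have h2 : ‖s / 2‖ ≤ 1 := by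
    rw [norm_div]; simpa using (div_le_one (by norm_num : (0:ℝ) < ‖(2:ℂ)‖)).2 (by simpa using hs)
  have key : ‖s / 2 - (starRingEnd ℂ) (s / 2) * p‖ +
      ‖s / 2 - (starRingEnd ℂ) (s / 2) * p‖
      = ‖s - (starRingEnd ℂ) s * p‖ := by
    have : s / 2 - (starRingEnd ℂ) (s / 2) * p = (s - (starRingEnd ℂ) s * p) / 2 := by
      simp only [map_div₀, map_ofNat]; field_simp
    rw [this, norm_div]
    simp
  rw [key]
  exact ⟨fun h => ⟨h.2, h2, h2⟩, fun h => ⟨hs, h.1⟩⟩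
end

section
/- If (x1, x2, x3) lies in the distinguished boundary of the tetrablock, i.e., x1 = conj(x2)·x3, |x3| = 1, and |x2| ≤ 1, then the pair (i·x1 − i·x2, x3) lies in the distinguished boundary of the symmetrised bidisc: |x3| = 1, |i·x1 − i·x2| ≤ 2, and (i·x1 − i·x2) = conj(i·x1 − i·x2)·x3. -/
open Complex

theorem dist_bdry_tetrablock_diff (x₁ x₂ x₃ : ℂ)
    (h1 : x₁ = (starRingEnd ℂ) x₂ * x₃) (h3 : ‖x₃‖ = 1)
    (h2 : ‖x₂‖ ≤ 1) :
    ‖x₃‖ = 1 ∧ ‖Complex.I * x₁ - Complex.I * x₂‖ ≤ 2 ∧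
      Complex.I * x₁ - Complex.I * x₂ =
        (starRingEnd ℂ) (Complex.I * x₁ - Complex.I * x₂) * x₃ := by
  have h1abs : ‖x₁‖ ≤ 1 := by
    rw [h1, norm_mul, Complex.norm_conj, h3, mul_one]; exact h2
  have hconj : (starRingEnd ℂ) x₃ * x₃ = 1 := by
    rw [mul_comm, Complex.mul_conj, ← Complex.sq_norm, h3]; norm_num
  refine ⟨h3, ?_, ?_⟩
  · calc ‖Complex.I * x₁ - Complex.I * x₂‖
        ≤ ‖Complex.I * x₁‖ + ‖Complex.I * x₂‖ :=
          norm_sub_le _ _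
      _ ≤ 2 := by simp only [norm_mul, Complex.norm_I, one_mul]; linarith
  · have h2' : x₂ = (starRingEnd ℂ) x₁ * x₃ := by
      rw [h1]; simp only [map_mul, Complex.conj_conj]
      rw [mul_assoc, hconj, mul_one]
    simp only [map_sub, map_mul, Complex.conj_I]
    rw [sub_mul, mul_assoc, mul_assoc, ← h1, ← h2']
    ring
end

section
/- Let β1, β2 ∈ C with |β1| + |β2| = 1, and let x3 ∈ C with |x3| ≤ 1. Set x1 = β1 + conj(β2)·x3 and x2 = β2 + conj(β1)·x3. Then |x1 - conj(x2)·x3| + |x2 - conj(x1)·x3| = 1 - |x3|^2, and |x1| ≤ 1, |x2| ≤ 1; hence (x1, x2, x3) lies in the topological boundary of the tetrablock. -/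
open Complex

theorem superficial_point (β₁ β₂ x₃ : ℂ)
    (hβ : ‖β₁‖ + ‖β₂‖ = 1) (hx₃ : ‖x₃‖ ≤ 1) :
    ‖((β₁ + (starRingEnd ℂ) β₂ * x₃) -
        (starRingEnd ℂ) (β₂ + (starRingEnd ℂ) β₁ * x₃) * x₃)‖ +
      ‖((β₂ + (starRingEnd ℂ) β₁ * x₃) -
        (starRingEnd ℂ) (β₁ + (starRingEnd ℂ) β₂ * x₃) * x₃)‖
      = 1 - ‖x₃‖ ^ 2 ∧
    ‖(β₁ + (starRingEnd ℂ) β₂ * x₃)‖ ≤ 1 ∧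
    ‖(β₂ + (starRingEnd ℂ) β₁ * x₃)‖ ≤ 1 := by
  have hconj : x₃ * (starRingEnd ℂ) x₃ = ((‖x₃‖ : ℝ) ^ 2 : ℂ) := by
    rw [Complex.mul_conj, ← Complex.sq_norm]
    push_cast
    ring
  have h1 : (β₁ + (starRingEnd ℂ) β₂ * x₃) -
      (starRingEnd ℂ) (β₂ + (starRingEnd ℂ) β₁ * x₃) * x₃
      = β₁ * (1 - ((‖x₃‖ : ℝ) ^ 2 : ℂ)) := by
    simp only [map_add, map_mul, Complex.conj_conj]
    rw [← hconj]; ring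
  have h2 : (β₂ + (starRingEnd ℂ) β₁ * x₃) -
      (starRingEnd ℂ) (β₁ + (starRingEnd ℂ) β₂ * x₃) * x₃
      = β₂ * (1 - ((‖x₃‖ : ℝ) ^ 2 : ℂ)) := by
    simp only [map_add, map_mul, Complex.conj_conj]
    rw [← hconj]; ring
  have hnn : (0:ℝ) ≤ 1 - ‖x₃‖ ^ 2 := by nlinarith [norm_nonneg x₃]
  have habs : ‖(1 - ((‖x₃‖ : ℝ) ^ 2 : ℂ))‖ = 1 - ‖x₃‖ ^ 2 := by
    rw [show (1 - ((‖x₃‖ : ℝ) ^ 2 : ℂ)) = (((1 - ‖x₃‖ ^ 2 : ℝ)) : ℂ) by push_cast; ring,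
      Complex.norm_real, Real.norm_eq_abs, _root_.abs_of_nonneg hnn]
  refine ⟨?_, ?_, ?_⟩
  · rw [h1, h2, norm_mul, norm_mul, habs, ← add_mul, hβ, one_mul]
  · calc ‖(β₁ + (starRingEnd ℂ) β₂ * x₃)‖
        ≤ ‖β₁‖ + ‖((starRingEnd ℂ) β₂ * x₃)‖ := norm_add_le _ _
      _ ≤ ‖β₁‖ + ‖β₂‖ * 1 := by
          rw [norm_mul, Complex.norm_conj]
          gcongr
      _ = 1 := by rw [mul_one, hβ]
  · calc ‖(β₂ + (starRingEnd ℂ) β₁ * x₃)‖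
        ≤ ‖β₂‖ + ‖((starRingEnd ℂ) β₁ * x₃)‖ := norm_add_le _ _
      _ ≤ ‖β₂‖ + ‖β₁‖ * 1 := by
          rw [norm_mul, Complex.norm_conj]
          gcongr
      _ = 1 := by rw [mul_one, add_comm, hβ]
end

section
/- Let β1, β2 be nonzero complex numbers with |β1| + |β2| = 1, and set ω = conj(β2)/|β2| and k = β1/|β1|. Then for every x3 ∈ C with |β2 + conj(β1)·x3| < 1 (ensuring the denominator is nonzero for |ω| = 1), the Möbius-type expression Ψ_ω(x1, x2, x3) = (x3·ω − x1)/(x2·ω − 1), evaluated at x1 = β1 + conj(β2)·x3 and x2 = β2 + conj(β1)·x3, equals k. -/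
open Complex

theorem Psi_omega_constant (β₁ β₂ : ℂ) (hβ₁ : β₁ ≠ 0) (hβ₂ : β₂ ≠ 0)
    (hβ : ‖β₁‖ + ‖β₂‖ = 1)
    (ω k : ℂ) (hω : ω = (starRingEnd ℂ) β₂ / (‖β₂‖ : ℂ))
    (hk : k = β₁ / (‖β₁‖ : ℂ)) :
    ∀ x₃ : ℂ, ‖β₂ + (starRingEnd ℂ) β₁ * x₃‖ < 1 →
      (x₃ * ω - (β₁ + (starRingEnd ℂ) β₂ * x₃)) /
        ((β₂ + (starRingEnd ℂ) β₁ * x₃) * ω - 1) = k := by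
  intro x₃ hx
  have ha : (‖β₁‖ : ℂ) ≠ 0 := by
    exact_mod_cast (norm_ne_zero_iff.mpr hβ₁)
  have hb : (‖β₂‖ : ℂ) ≠ 0 := by
    exact_mod_cast (norm_ne_zero_iff.mpr hβ₂)
  have h1 : β₂ * (starRingEnd ℂ) β₂ = (‖β₂‖ : ℂ) ^ 2 := by
    rw [Complex.mul_conj, Complex.normSq_eq_norm_sq]; push_cast; ring
  have h2 : β₁ * (starRingEnd ℂ) β₁ = (‖β₁‖ : ℂ) ^ 2 := by
    rw [Complex.mul_conj, Complex.normSq_eq_norm_sq]; push_cast; ring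
  have hsum : (‖β₁‖ : ℂ) + (‖β₂‖ : ℂ) = 1 := by
    exact_mod_cast hβ
  have habs : ‖ω‖ = 1 := by
    rw [hω]
    rw [norm_div, Complex.norm_conj, Complex.norm_real, norm_norm, div_self (norm_ne_zero_iff.mpr hβ₂)]
  have hden : (β₂ + (starRingEnd ℂ) β₁ * x₃) * ω - 1 ≠ 0 := by
    intro h
    have he : (β₂ + (starRingEnd ℂ) β₁ * x₃) * ω = 1 := by linear_combination h
    have h2' : ‖(β₂ + (starRingEnd ℂ) β₁ * x₃) * ω‖ = 1 := by rw [he]; simp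
    rw [norm_mul, habs, mul_one] at h2'
    exact absurd h2' (ne_of_lt hx)
  have hωb : ω * (‖β₂‖ : ℂ) = (starRingEnd ℂ) β₂ := by
    rw [hω]; field_simp
  have hka : k * (‖β₁‖ : ℂ) = β₁ := by
    rw [hk]; field_simp
  have hωβ₂ : β₂ * ω = (‖β₂‖ : ℂ) := by
    have : β₂ * ω * (‖β₂‖ : ℂ) = (‖β₂‖ : ℂ) * (‖β₂‖ : ℂ) := by
      linear_combination β₂ * hωb + h1
    exact mul_right_cancel₀ hb this
  have hkc1 : k * (starRingEnd ℂ) β₁ = (‖β₁‖ : ℂ) := by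
    have : k * (starRingEnd ℂ) β₁ * (‖β₁‖ : ℂ) = (‖β₁‖ : ℂ) * (‖β₁‖ : ℂ) := by
      linear_combination (starRingEnd ℂ) β₁ * hka + h2
    exact mul_right_cancel₀ ha this
  rw [div_eq_iff hden]
  linear_combination (-x₃ * ω) * hkc1 - k * hωβ₂ - (x₃ * ω + k) * hsum + x₃ * hωb + hka
end
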